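/- For every n ≥ 1: LB_n(13/2; q) = 2^{n-1} = RS_n(13/2; q) (constant polynomials), and LS_n(13/2; q) = ∏_{i=1}^{n-1} (1 + q^i) = RB_n(13/2; q). -/

import Mathlib

open Finset

/-- `IsRGF w` : `w = a₁⋯aₙ` is a restricted growth function: all letters are
positive, the first letter is `1` and each later letter is at most one more
than the maximum of the preceding prefix. -/
def IsRGF (w : List ℕ) : Prop :=
  (∀ a ∈ w, 1 ≤ a) ∧
  (0 < w.length → w.getD 0 0 = 1) ∧
  (∀ j : ℕ, j + 1 < w.length →
    w.getD (j + 1) 0 ≤ 1 + (w.take (j + 1)).foldr max 0)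

/-- The set partition encoded by the word `w` contains the set-partition
pattern encoded by the word `p`:  there are positions, listed increasingly,
whose "same block" (= same letter) pattern in `w` is exactly that of `p`. -/
def ContainsPat (w p : List ℕ) : Prop :=
  ∃ f : Fin p.length → Fin w.length, StrictMono f ∧
    ∀ a b : Fin p.length, (w.get (f a) = w.get (f b) ↔ p.get a = p.get b)

/-- `Rn n p` : the restricted growth functions of length `n` whose associated
set partition avoids the pattern (of set partitions) encoded by the RGF `p`.
Via the standard bijection `σ ↦ w(σ)` this is `R_n(π) ≅ Π_n(π)`.
Patterns of `[3]`:  `1/2/3 ↦ [1,2,3]`, `1/23 ↦ [1,2,2]`, `13/2 ↦ [1,2,1]`,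
`12/3 ↦ [1,1,2]`, `123 ↦ [1,1,1]`. -/
def Rn (n : ℕ) (p : List ℕ) : Set (List ℕ) :=
  {w | w.length = n ∧ IsRGF w ∧ ¬ ContainsPat w p}

/-- `lb` : sum over positions `j` of the number of distinct values occurring
before position `j` that are bigger than the letter at `j`. -/
def statLB (w : List ℕ) : ℕ :=
  ∑ j ∈ Finset.range w.length,
    ((w.take j).toFinset.filter (fun v => w.getD j 0 < v)).card

/-- `ls` : left and smaller. -/
def statLS (w : List ℕ) : ℕ :=
  ∑ j ∈ Finset.range w.length,
    ((w.take j).toFinset.filter (fun v => v < w.getD j 0)).card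

/-- `rb` : right and bigger. -/
def statRB (w : List ℕ) : ℕ :=
  ∑ j ∈ Finset.range w.length,
    ((w.drop (j + 1)).toFinset.filter (fun v => w.getD j 0 < v)).card

/-- `rs` : right and smaller. -/
def statRS (w : List ℕ) : ℕ :=
  ∑ j ∈ Finset.range w.length,
    ((w.drop (j + 1)).toFinset.filter (fun v => v < w.getD j 0)).card

/-- The four–variable generating function
`F_n(π;q,r,s,t) = ∑_{σ∈Π_n(π)} q^{lb} r^{ls} s^{rb} t^{rs}`, with
`q = X 0`, `r = X 1`, `s = X 2`, `t = X 3`. -/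
noncomputable def Fgen (n : ℕ) (p : List ℕ) : MvPolynomial (Fin 4) ℤ :=
  ∑ᶠ w ∈ Rn n p,
    (MvPolynomial.X 0 : MvPolynomial (Fin 4) ℤ) ^ statLB w *
      MvPolynomial.X 1 ^ statLS w *
      MvPolynomial.X 2 ^ statRB w *
      MvPolynomial.X 3 ^ statRS w

/-- `LB_n(π;q)`. -/
noncomputable def LBp (n : ℕ) (p : List ℕ) : Polynomial ℤ :=
  ∑ᶠ w ∈ Rn n p, Polynomial.X ^ statLB w

/-- `LS_n(π;q)`. -/
noncomputable def LSp (n : ℕ) (p : List ℕ) : Polynomial ℤ :=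
  ∑ᶠ w ∈ Rn n p, Polynomial.X ^ statLS w

/-- `RB_n(π;q)`. -/
noncomputable def RBp (n : ℕ) (p : List ℕ) : Polynomial ℤ :=
  ∑ᶠ w ∈ Rn n p, Polynomial.X ^ statRB w

/-- `RS_n(π;q)`. -/
noncomputable def RSp (n : ℕ) (p : List ℕ) : Polynomial ℤ :=
  ∑ᶠ w ∈ Rn n p, Polynomial.X ^ statRS w

def wrd (n : ℕ) (S : Finset ℕ) : List ℕ :=
  List.ofFn (fun j : Fin n => 1 + (S.filter (· < j.val)).card)

lemma wrd_length (n : ℕ) (S : Finset ℕ) : (wrd n S).length = n := by simp [wrd]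

lemma wrd_getD (n : ℕ) (S : Finset ℕ) {j : ℕ} (h : j < n) :
    (wrd n S).getD j 0 = 1 + (S.filter (· < j)).card := by
  rw [List.getD_eq_getElem _ _ (by simp [wrd_length, h])]
  simp [wrd]

lemma card_filter_lt_succ (S : Finset ℕ) (j : ℕ) :
    (S.filter (· < j + 1)).card = (S.filter (· < j)).card + (if j ∈ S then 1 else 0) := by
  have h : S.filter (· < j + 1) = S.filter (· < j) ∪ S.filter (· = j) := by
    rw [← Finset.filter_or]
    apply Finset.filter_congr
    intro x _
    constructor
    · intro h; omega
    · intro h; omega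
  rw [h, Finset.card_union_of_disjoint, Finset.filter_eq']
  · by_cases h' : j ∈ S <;> simp [h']
  · simp only [Finset.disjoint_filter]
    intro x _ hx hx'
    omega

lemma wrd_mono (n : ℕ) (S : Finset ℕ) {i j : ℕ} (hij : i ≤ j) (hj : j < n) :
    (wrd n S).getD i 0 ≤ (wrd n S).getD j 0 := by
  rw [wrd_getD n S (lt_of_le_of_lt hij hj), wrd_getD n S hj]
  have : S.filter (· < i) ⊆ S.filter (· < j) := by
    intro x hx
    simp only [Finset.mem_filter] at hx ⊢
    exact ⟨hx.1, by omega⟩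
  have := Finset.card_le_card this
  omega

lemma wrd_step (n : ℕ) (S : Finset ℕ) {j : ℕ} (hj : j + 1 < n) :
    (wrd n S).getD (j + 1) 0 ≤ (wrd n S).getD j 0 + 1 := by
  rw [wrd_getD n S hj, wrd_getD n S (by omega), card_filter_lt_succ]
  split <;> omega

lemma mem_foldr_max (l : List ℕ) (h : l ≠ []) : l.foldr max 0 ∈ l := by
  induction l with
  | nil => simp at h
  | cons a t ih =>
    rcases eq_or_ne t [] with rfl | ht
    · simp
    · simp only [List.foldr_cons]
      rcases max_choice a (t.foldr max 0) with h1 | h1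
      · rw [h1]; exact List.mem_cons_self
      · rw [h1]; exact List.mem_cons_of_mem _ (ih ht)

lemma le_foldr_max (l : List ℕ) {a : ℕ} (h : a ∈ l) : a ≤ l.foldr max 0 := by
  induction l with
  | nil => simp at h
  | cons b t ih =>
    simp only [List.foldr_cons]
    rcases List.mem_cons.1 h with rfl | h'
    · exact le_max_left _ _
    · exact le_trans (ih h') (le_max_right _ _)

lemma attain_rgf {w : List ℕ} (hw : IsRGF w) :
    ∀ j, j < w.length → ∀ v, 1 ≤ v → v ≤ w.getD j 0 → ∃ i ≤ j, w.getD i 0 = v := by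
  intro j
  induction j using Nat.strong_induction_on with
  | _ j ih =>
    intro hj v hv1 hv2
    rcases eq_or_lt_of_le hv2 with heq | hlt
    · exact ⟨j, le_refl j, heq.symm⟩
    · match j, hj with
      | 0, hj =>
        have := hw.2.1 (by omega)
        omega
      | j + 1, hj =>
        set M := (w.take (j + 1)).foldr max 0 with hM
        have hub := hw.2.2 j hj
        have hne : w.take (j + 1) ≠ [] := by
          have : (w.take (j + 1)).length = j + 1 := by
            rw [List.length_take]; omega
          intro h; rw [h] at this; simp at this
        have hmem : M ∈ w.take (j + 1) := mem_foldr_max _ hne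
        obtain ⟨i, hi, hiv⟩ := List.mem_take_iff_getElem.1 hmem
        have hi' : i < j + 1 := lt_of_lt_of_le hi (min_le_left _ _)
        have hiw : w.getD i 0 = M := by
          rw [List.getD_eq_getElem _ _ (by omega : i < w.length)]; exact hiv
        have hvM : v ≤ M := by omega
        rcases eq_or_lt_of_le hvM with heq | hlt2
        · exact ⟨i, by omega, by rw [hiw, heq]⟩
        · obtain ⟨i', hi'', hi'v⟩ := ih i (by omega) (by omega) v hv1 (by omega)
          exact ⟨i', by omega, hi'v⟩


lemma get_eq_getD (w : List ℕ) (i : Fin w.length) : w.get i = w.getD i.val 0 := by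
  rw [List.get_eq_getElem, List.getD_eq_getElem]

lemma avoid_of_mono {w : List ℕ}
    (hmono : ∀ i j : ℕ, i ≤ j → j < w.length → w.getD i 0 ≤ w.getD j 0) :
    ¬ ContainsPat w [1, 2, 1] := by
  rintro ⟨f, hf, hp⟩
  have l3 : ([1, 2, 1] : List ℕ).length = 3 := rfl
  set a0 : Fin ([1, 2, 1] : List ℕ).length := ⟨0, by omega⟩
  set a1 : Fin ([1, 2, 1] : List ℕ).length := ⟨1, by omega⟩
  set a2 : Fin ([1, 2, 1] : List ℕ).length := ⟨2, by omega⟩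
  have h02 : w.get (f a0) = w.get (f a2) := (hp a0 a2).2 rfl
  have h01 : ¬ (w.get (f a0) = w.get (f a1)) := by
    intro h
    have := (hp a0 a1).1 h
    simp [a0, a1] at this
  have hf01 : f a0 < f a1 := hf (by simp [a0, a1, Fin.lt_def])
  have hf12 : f a1 < f a2 := hf (by simp [a1, a2, Fin.lt_def])
  have m1 : w.getD (f a0).val 0 ≤ w.getD (f a1).val 0 :=
    hmono _ _ (le_of_lt hf01) (f a1).isLt
  have m2 : w.getD (f a1).val 0 ≤ w.getD (f a2).val 0 :=
    hmono _ _ (le_of_lt hf12) (f a2).isLt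
  rw [get_eq_getD, get_eq_getD] at h02 h01
  omega

lemma contains_of {w : List ℕ} {i0 i j : ℕ} (h01 : i0 < i) (h12 : i < j)
    (hj : j < w.length) (he : w.getD i0 0 = w.getD j 0)
    (hne : w.getD i0 0 ≠ w.getD i 0) : ContainsPat w [1, 2, 1] := by
  have hi0 : i0 < w.length := by omega
  have hi : i < w.length := by omega
  rw [List.getD_eq_getElem _ _ hi0, List.getD_eq_getElem _ _ hj] at he
  rw [List.getD_eq_getElem _ _ hi0, List.getD_eq_getElem _ _ hi] at hne
  refine ⟨![⟨i0, by omega⟩, ⟨i, by omega⟩, ⟨j, hj⟩], ?_, ?_⟩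
  · intro a b hab
    fin_cases a <;> fin_cases b <;>
      simp_all [Fin.lt_def] <;> omega
  · intro a b
    fin_cases a <;> fin_cases b <;>
      simp [List.get] <;> omega


lemma pos_of_rgf {w : List ℕ} (hw : IsRGF w) {j : ℕ} (hj : j < w.length) :
    1 ≤ w.getD j 0 := by
  rw [List.getD_eq_getElem _ _ hj]
  exact hw.1 _ (List.getElem_mem hj)

lemma mono_of_avoid {w : List ℕ} (hw : IsRGF w) (hav : ¬ ContainsPat w [1, 2, 1]) :
    ∀ i j : ℕ, i ≤ j → j < w.length → w.getD i 0 ≤ w.getD j 0 := by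
  intro i j hij hj
  by_contra hlt
  push_neg at hlt
  have hi : i < w.length := by omega
  have hvi : 1 ≤ w.getD j 0 := pos_of_rgf hw hj
  obtain ⟨i0, hi0i, hi0v⟩ := attain_rgf hw i hi (w.getD j 0) hvi (le_of_lt hlt)
  have hne : i0 ≠ i := by intro h; rw [h] at hi0v; omega
  have hij' : i < j := by
    rcases eq_or_lt_of_le hij with h | h
    · subst h; omega
    · exact h
  exact hav (contains_of (by omega) hij' hj hi0v (by omega))

lemma step_of_avoid {w : List ℕ} (hw : IsRGF w) (hav : ¬ ContainsPat w [1, 2, 1]) :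
    ∀ j : ℕ, j + 1 < w.length → w.getD (j + 1) 0 ≤ w.getD j 0 + 1 := by
  intro j hj
  have hub := hw.2.2 j hj
  set M := (w.take (j + 1)).foldr max 0 with hM
  have hne : w.take (j + 1) ≠ [] := by
    have : (w.take (j + 1)).length = j + 1 := by rw [List.length_take]; omega
    intro h; rw [h] at this; simp at this
  obtain ⟨i, hi, hiv⟩ := List.mem_take_iff_getElem.1 (mem_foldr_max _ hne)
  have hi' : i < j + 1 := lt_of_lt_of_le hi (min_le_left _ _)
  have hiw : w.getD i 0 = M := by
    rw [List.getD_eq_getElem _ _ (by omega : i < w.length)]; exact hiv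
  have := mono_of_avoid hw hav i j (by omega) (by omega)
  omega

lemma wrd_isRGF (n : ℕ) (S : Finset ℕ) : IsRGF (wrd n S) := by
  refine ⟨?_, ?_, ?_⟩
  · intro a ha
    simp only [wrd, List.mem_ofFn] at ha
    obtain ⟨i, rfl⟩ := ha
    exact Nat.le_add_right _ _
  · intro h
    rw [wrd_length] at h
    rw [wrd_getD n S h]
    simp [Nat.not_lt_zero]
  · intro j hj
    rw [wrd_length] at hj
    have hstep := wrd_step n S hj
    have hmem : (wrd n S).getD j 0 ∈ (wrd n S).take (j + 1) := by
      apply List.mem_take_iff_getElem.2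
      exact ⟨j, by simp [wrd_length]; omega, (List.getD_eq_getElem _ _ (by rw [wrd_length]; omega)).symm⟩
    have := le_foldr_max _ hmem
    omega

lemma wrd_avoid (n : ℕ) (S : Finset ℕ) : ¬ ContainsPat (wrd n S) [1, 2, 1] := by
  apply avoid_of_mono
  intro i j hij hj
  rw [wrd_length] at hj
  exact wrd_mono n S hij hj

lemma wrd_mem_iff {n : ℕ} (hn : 1 ≤ n) {i : ℕ} (hi : i < n - 1) (S : Finset ℕ) :
    i ∈ S ↔ (wrd n S).getD (i + 1) 0 = (wrd n S).getD i 0 + 1 := by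
  rw [wrd_getD n S (by omega), wrd_getD n S (by omega), card_filter_lt_succ]
  by_cases h : i ∈ S <;> simp [h] <;> omega

lemma Rn_eq (n : ℕ) (hn : 1 ≤ n) :
    Rn n [1, 2, 1] = ↑(((Finset.range (n - 1)).powerset).image (wrd n)) := by
  ext w
  simp only [Rn, Set.mem_setOf_eq, Finset.coe_image, Set.mem_image, Finset.mem_coe,
    Finset.mem_powerset]
  constructor
  · rintro ⟨hlen, hrgf, hav⟩
    set S := (Finset.range (n - 1)).filter
      (fun i => w.getD (i + 1) 0 = w.getD i 0 + 1) with hS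
    refine ⟨S, Finset.filter_subset _ _, ?_⟩
    have key : ∀ j, j < n → 1 + (S.filter (· < j)).card = w.getD j 0 := by
      intro j
      induction j with
      | zero =>
        intro _
        have h0 := hrgf.2.1 (by omega)
        have he : S.filter (· < 0) = ∅ := by
          apply Finset.filter_eq_empty_iff.2
          intro x _
          omega
        rw [he, Finset.card_empty, h0]
      | succ j ih =>
        intro hj
        have hj' : j < n := by omega
        rw [card_filter_lt_succ]
        have hmono := mono_of_avoid hrgf hav j (j + 1) (by omega) (by omega)
        have hstep := step_of_avoid hrgf hav j (by omega)
        by_cases hjS : j ∈ S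
        · have : w.getD (j + 1) 0 = w.getD j 0 + 1 := by
            rw [hS, Finset.mem_filter] at hjS; exact hjS.2
          rw [if_pos hjS, this, ← ih hj']
          omega
        · have hne : ¬ (w.getD (j + 1) 0 = w.getD j 0 + 1) := by
            intro h
            exact hjS (by rw [hS, Finset.mem_filter]; exact ⟨Finset.mem_range.2 (by omega), h⟩)
          have : w.getD (j + 1) 0 = w.getD j 0 := by omega
          rw [if_neg hjS, this, ← ih hj']
          omega
    apply List.ext_getElem (by rw [wrd_length, hlen])
    intro i h1 h2
    rw [← List.getD_eq_getElem _ 0 h1, ← List.getD_eq_getElem _ 0 h2]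
    rw [wrd_getD n S (by rw [wrd_length] at h1; omega)]
    exact key i (by rw [wrd_length] at h1; omega)
  · rintro ⟨S, hSsub, rfl⟩
    exact ⟨wrd_length n S, wrd_isRGF n S, wrd_avoid n S⟩

lemma wrd_inj (n : ℕ) (hn : 1 ≤ n) :
    Set.InjOn (wrd n) ((Finset.range (n - 1)).powerset : Finset (Finset ℕ)) := by
  intro S hS T hT h
  simp only [Finset.coe_powerset, Set.mem_preimage, Set.mem_powerset_iff,
    Finset.coe_subset, Finset.mem_coe, Finset.mem_powerset] at hS hT
  ext i
  by_cases hi : i < n - 1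
  · rw [wrd_mem_iff hn hi S, wrd_mem_iff hn hi T, h]
  · constructor
    · intro hiS
      exact absurd (Finset.mem_range.1 (hS hiS)) hi
    · intro hiT
      exact absurd (Finset.mem_range.1 (hT hiT)) hi


lemma wrd_statLB (n : ℕ) (S : Finset ℕ) : statLB (wrd n S) = 0 := by
  apply Finset.sum_eq_zero
  intro j hj
  rw [Finset.mem_range, wrd_length] at hj
  rw [Finset.card_eq_zero, Finset.filter_eq_empty_iff]
  intro v hv
  rw [List.mem_toFinset] at hv
  obtain ⟨i, hi, hiv⟩ := List.mem_take_iff_getElem.1 hv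
  have hin : i < n := by rw [wrd_length] at hi; omega
  have hij : i ≤ j := by omega
  have hm := wrd_mono n S hij hj
  rw [List.getD_eq_getElem _ 0 (by rw [wrd_length]; exact hin)] at hm
  rw [hiv] at hm
  omega

lemma wrd_statRS (n : ℕ) (S : Finset ℕ) : statRS (wrd n S) = 0 := by
  apply Finset.sum_eq_zero
  intro j hj
  rw [Finset.mem_range, wrd_length] at hj
  rw [Finset.card_eq_zero, Finset.filter_eq_empty_iff]
  intro v hv
  rw [List.mem_toFinset, List.mem_iff_getElem] at hv
  obtain ⟨i, hi, hiv⟩ := hv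
  rw [List.getElem_drop] at hiv
  have hlen : j + 1 + i < n := by
    rw [List.length_drop, wrd_length] at hi; omega
  have hm := wrd_mono n S (by omega : j ≤ j + 1 + i) hlen
  have hv' : (wrd n S).getD (j + 1 + i) 0 = v := by
    rw [List.getD_eq_getElem _ 0 (by rw [wrd_length]; exact hlen)]
    exact hiv
  omega

lemma wrd_prefix_filter (n : ℕ) (S : Finset ℕ) {j : ℕ} (hj : j < n) :
    (((wrd n S).take j).toFinset.filter (fun v => v < (wrd n S).getD j 0)) =
      Finset.Ico 1 ((wrd n S).getD j 0) := by
  ext v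
  simp only [Finset.mem_filter, Finset.mem_Ico, List.mem_toFinset]
  constructor
  · rintro ⟨hv, hlt⟩
    obtain ⟨i, hi, hiv⟩ := List.mem_take_iff_getElem.1 hv
    have hin : i < n := by rw [wrd_length] at hi; omega
    have h1 : 1 ≤ (wrd n S).getD i 0 :=
      pos_of_rgf (wrd_isRGF n S) (by rw [wrd_length]; exact hin)
    rw [List.getD_eq_getElem _ 0 (by rw [wrd_length]; exact hin), hiv] at h1
    exact ⟨h1, hlt⟩
  · rintro ⟨h1, hlt⟩
    refine ⟨?_, hlt⟩
    cases j with
    | zero =>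
      exfalso
      have h0 : (wrd n S).getD 0 0 = 1 := by
        rw [wrd_getD n S hj]
        have : S.filter (· < 0) = ∅ := by
          apply Finset.filter_eq_empty_iff.2; intro x _; omega
        rw [this, Finset.card_empty]
      omega
    | succ m =>
      have hstep := wrd_step n S hj
      have hle : v ≤ (wrd n S).getD m 0 := by omega
      obtain ⟨i, hi, hiv⟩ :=
        attain_rgf (wrd_isRGF n S) m (by rw [wrd_length]; omega) v h1 hle
      apply List.mem_take_iff_getElem.2
      refine ⟨i, by rw [wrd_length]; omega, ?_⟩
      rw [← List.getD_eq_getElem _ 0 (by rw [wrd_length]; omega : i < (wrd n S).length)]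
      exact hiv

lemma wrd_suffix_filter (n : ℕ) (S : Finset ℕ) {j : ℕ} (hj : j < n) :
    (((wrd n S).drop (j + 1)).toFinset.filter (fun v => (wrd n S).getD j 0 < v)) =
      Finset.Ioc ((wrd n S).getD j 0) ((wrd n S).getD (n - 1) 0) := by
  ext v
  simp only [Finset.mem_filter, Finset.mem_Ioc, List.mem_toFinset]
  constructor
  · rintro ⟨hv, hlt⟩
    refine ⟨hlt, ?_⟩
    rw [List.mem_iff_getElem] at hv
    obtain ⟨i, hi, hiv⟩ := hv
    rw [List.getElem_drop] at hiv
    have hlen : j + 1 + i < n := by rw [List.length_drop, wrd_length] at hi; omega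
    have hm := wrd_mono n S (by omega : j + 1 + i ≤ n - 1) (by omega : n - 1 < n)
    have hv' : (wrd n S).getD (j + 1 + i) 0 = v := by
      rw [List.getD_eq_getElem _ 0 (by rw [wrd_length]; exact hlen)]
      exact hiv
    omega
  · rintro ⟨hlt, hle⟩
    have hpos : 1 ≤ (wrd n S).getD j 0 :=
      pos_of_rgf (wrd_isRGF n S) (by rw [wrd_length]; exact hj)
    obtain ⟨i, hi, hiv⟩ :=
      attain_rgf (wrd_isRGF n S) (n - 1) (by rw [wrd_length]; omega) v (by omega) hle
    have hij : j < i := by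
      by_contra hc
      push_neg at hc
      have := wrd_mono n S hc hj
      omega
    refine ⟨?_, hlt⟩
    rw [List.mem_iff_getElem]
    refine ⟨i - (j + 1), by rw [List.length_drop, wrd_length]; omega, ?_⟩
    rw [List.getElem_drop]
    have hidx : j + 1 + (i - (j + 1)) = i := by omega
    calc (wrd n S)[j + 1 + (i - (j + 1))]'(by rw [wrd_length]; omega)
        = (wrd n S).getD (j + 1 + (i - (j + 1))) 0 :=
          (List.getD_eq_getElem _ _ _).symm
      _ = (wrd n S).getD i 0 := by rw [hidx]
      _ = v := hiv

lemma filter_le_range (i n : ℕ) (h : i < n) :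
    (Finset.range n).filter (fun j => j ≤ i) = Finset.range (i + 1) := by
  ext x
  simp only [Finset.mem_filter, Finset.mem_range]
  omega

lemma filter_gt_range (i n : ℕ) :
    (Finset.range n).filter (fun j => i < j) = Finset.Ico (i + 1) n := by
  ext x
  simp only [Finset.mem_filter, Finset.mem_range, Finset.mem_Ico]
  omega

lemma wrd_statLS (n : ℕ) (hn : 1 ≤ n) {S : Finset ℕ} (hS : S ⊆ Finset.range (n - 1)) :
    statLS (wrd n S) = ∑ i ∈ S, (n - 1 - i) := by
  unfold statLS
  rw [wrd_length]
  have step1 : ∀ j ∈ Finset.range n,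
      (((wrd n S).take j).toFinset.filter (fun v => v < (wrd n S).getD j 0)).card =
        (S.filter (· < j)).card := by
    intro j hj
    rw [Finset.mem_range] at hj
    rw [wrd_prefix_filter n S hj, Nat.card_Ico, wrd_getD n S hj]
    omega
  rw [Finset.sum_congr rfl step1]
  have step2 : ∀ j ∈ Finset.range n,
      (S.filter (· < j)).card = ∑ i ∈ S, if i < j then 1 else 0 := by
    intro j _
    exact Finset.card_filter _ _
  rw [Finset.sum_congr rfl step2, Finset.sum_comm]
  apply Finset.sum_congr rfl
  intro i hi
  have hin : i < n - 1 := Finset.mem_range.1 (hS hi)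
  rw [← Finset.card_filter, filter_gt_range, Nat.card_Ico]
  omega

lemma wrd_statRB (n : ℕ) (hn : 1 ≤ n) {S : Finset ℕ} (hS : S ⊆ Finset.range (n - 1)) :
    statRB (wrd n S) = ∑ i ∈ S, (i + 1) := by
  unfold statRB
  rw [wrd_length]
  have hSfull : S.filter (· < n - 1) = S := by
    apply Finset.filter_true_of_mem
    intro x hx
    exact Finset.mem_range.1 (hS hx)
  have step1 : ∀ j ∈ Finset.range n,
      (((wrd n S).drop (j + 1)).toFinset.filter (fun v => (wrd n S).getD j 0 < v)).card =
        (S.filter (fun i => j ≤ i)).card := by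
    intro j hj
    rw [Finset.mem_range] at hj
    rw [wrd_suffix_filter n S hj, Nat.card_Ioc, wrd_getD n S hj,
      wrd_getD n S (by omega : n - 1 < n), hSfull]
    have hsplit := Finset.card_filter_add_card_filter_not (s := S) (· < j)
    have : S.filter (fun a => ¬ a < j) = S.filter (fun i => j ≤ i) := by
      apply Finset.filter_congr
      intro x _
      constructor
      · intro h; omega
      · intro h; omega
    rw [this] at hsplit
    have hsub : (S.filter (· < j)).card ≤ S.card := Finset.card_le_card (Finset.filter_subset _ _)
    omega
  rw [Finset.sum_congr rfl step1]
  have step2 : ∀ j ∈ Finset.range n,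
      (S.filter (fun i => j ≤ i)).card = ∑ i ∈ S, if j ≤ i then 1 else 0 := by
    intro j _
    exact Finset.card_filter _ _
  rw [Finset.sum_congr rfl step2, Finset.sum_comm]
  apply Finset.sum_congr rfl
  intro i hi
  have hin : i < n - 1 := Finset.mem_range.1 (hS hi)
  rw [← Finset.card_filter, filter_le_range i n (by omega), Finset.card_range]


lemma sum_pow_powerset (m : ℕ) (f : ℕ → ℕ) :
    ∑ S ∈ (Finset.range m).powerset, (Polynomial.X : Polynomial ℤ) ^ (∑ i ∈ S, f i) =
      ∏ i ∈ Finset.range m, ((Polynomial.X : Polynomial ℤ) ^ f i + 1) := by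
  rw [Finset.prod_add]
  apply Finset.sum_congr rfl
  intro t _
  rw [Finset.prod_const_one, mul_one, Finset.prod_pow_eq_pow_sum]

lemma prod_reindex_ls (n : ℕ) (hn : 1 ≤ n) :
    ∏ i ∈ Finset.range (n - 1), ((Polynomial.X : Polynomial ℤ) ^ (n - 1 - i) + 1) =
      ∏ i ∈ Finset.Icc 1 (n - 1), (1 + (Polynomial.X : Polynomial ℤ) ^ i) := by
  apply Finset.prod_nbij' (fun i => n - 1 - i) (fun j => n - 1 - j)
  · intro a ha
    rw [Finset.mem_range] at ha
    rw [Finset.mem_Icc]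
    omega
  · intro a ha
    rw [Finset.mem_Icc] at ha
    rw [Finset.mem_range]
    omega
  · intro a ha
    rw [Finset.mem_range] at ha
    omega
  · intro a ha
    rw [Finset.mem_Icc] at ha
    omega
  · intro a _
    rw [add_comm]

lemma prod_reindex_rb (n : ℕ) (hn : 1 ≤ n) :
    ∏ i ∈ Finset.range (n - 1), ((Polynomial.X : Polynomial ℤ) ^ (i + 1) + 1) =
      ∏ i ∈ Finset.Icc 1 (n - 1), (1 + (Polynomial.X : Polynomial ℤ) ^ i) := by
  apply Finset.prod_nbij' (fun i => i + 1) (fun j => j - 1)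
  · intro a ha
    rw [Finset.mem_range] at ha
    rw [Finset.mem_Icc]
    omega
  · intro a ha
    rw [Finset.mem_Icc] at ha
    rw [Finset.mem_range]
    omega
  · intro a _; omega
  · intro a ha
    rw [Finset.mem_Icc] at ha
    omega
  · intro a _
    rw [add_comm]

lemma sum_red (n : ℕ) (hn : 1 ≤ n) (F : List ℕ → Polynomial ℤ) :
    (∑ᶠ w ∈ Rn n [1, 2, 1], F w) =
      ∑ S ∈ (Finset.range (n - 1)).powerset, F (wrd n S) := by
  rw [Rn_eq n hn, finsum_mem_coe_finset, Finset.sum_image]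
  intro x hx y hy hxy
  exact wrd_inj n hn (Finset.mem_coe.2 hx) (Finset.mem_coe.2 hy) hxy

/-- `LB_n(13/2) = 2^{n-1} = RS_n(13/2)` (constant polynomials)
and `LS_n(13/2) = ∏_{i=1}^{n-1}(1+q^i) = RB_n(13/2)`. -/
theorem stmt12 (n : ℕ) (hn : 1 ≤ n) :
    LBp n [1, 2, 1] = (2 ^ (n - 1) : Polynomial ℤ) ∧
    RSp n [1, 2, 1] = (2 ^ (n - 1) : Polynomial ℤ) ∧
    LSp n [1, 2, 1] = ∏ i ∈ Finset.Icc 1 (n - 1), (1 + Polynomial.X ^ i) ∧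
    RBp n [1, 2, 1] = ∏ i ∈ Finset.Icc 1 (n - 1), (1 + Polynomial.X ^ i) := by
  have hconst : ((2 : Polynomial ℤ) ^ (n - 1)) =
      ((Finset.range (n - 1)).powerset.card) • (1 : Polynomial ℤ) := by
    rw [Finset.card_powerset, Finset.card_range, nsmul_eq_mul, mul_one]
    push_cast
    ring
  refine ⟨?_, ?_, ?_, ?_⟩
  · unfold LBp
    rw [sum_red n hn, hconst, ← Finset.sum_const]
    apply Finset.sum_congr rfl
    intro S hS
    rw [wrd_statLB, pow_zero]
  · unfold RSp
    rw [sum_red n hn, hconst, ← Finset.sum_const]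
    apply Finset.sum_congr rfl
    intro S hS
    rw [wrd_statRS, pow_zero]
  · unfold LSp
    rw [sum_red n hn, ← prod_reindex_ls n hn, ← sum_pow_powerset]
    apply Finset.sum_congr rfl
    intro S hS
    rw [wrd_statLS n hn (Finset.mem_powerset.1 hS)]
  · unfold RBp
    rw [sum_red n hn, ← prod_reindex_rb n hn, ← sum_pow_powerset]
    apply Finset.sum_congr rfl
    intro S hS
    rw [wrd_statRB n hn (Finset.mem_powerset.1 hS)]
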